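/- Let p be a prime and L ⊆ {1,…,p−1} with |L| = s. If F ⊆ 2^[n] is a family such that for all distinct A, B ∈ F, |A \ B| is congruent modulo p to some element of L, then |F| ≤ Σ_{i=0}^{s} C(n−1, i). -/

import Mathlib

open Finset

namespace Stmt8Aux

variable {n : ℕ}

/-- Monomial function on the cube: indicator that `T ⊆ B`. -/
def chi (p : ℕ) (T : Finset (Fin n)) : Finset (Fin n) → ZMod p :=
  fun B => if T ⊆ B then 1 else 0

/-- Span of monomials supported in `E` of degree at most `m`. -/
def Sp (p : ℕ) (E : Finset (Fin n)) (m : ℕ) : Submodule (ZMod p) (Finset (Fin n) → ZMod p) :=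
  Submodule.span (ZMod p) (chi p '' {T : Finset (Fin n) | T ⊆ E ∧ T.card ≤ m})

lemma mul_mem_Sp {p : ℕ} {E A' : Finset (Fin n)} (hA : A' ⊆ E) (c : ZMod p) {m : ℕ}
    {f : Finset (Fin n) → ZMod p} (hf : f ∈ Sp p E m) :
    (fun B => (c - ∑ j ∈ A', (if j ∈ B then (1 : ZMod p) else 0)) * f B) ∈ Sp p E (m + 1) := by
  induction hf using Submodule.span_induction with
  | mem x hx =>
      obtain ⟨T, ⟨hTE, hTc⟩, rfl⟩ := hx
      have key : (fun B => (c - ∑ j ∈ A', (if j ∈ B then (1 : ZMod p) else 0)) * chi p T B)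
          = c • chi p T - ∑ j ∈ A', chi p (insert j T) := by
        funext B
        simp only [Pi.sub_apply, Pi.smul_apply, Finset.sum_apply, smul_eq_mul, sub_mul,
          Finset.sum_mul]
        congr 1
        refine Finset.sum_congr rfl fun j _ => ?_
        by_cases hjB : j ∈ B <;> by_cases hTB : T ⊆ B <;>
          simp [chi, hjB, hTB, Finset.insert_subset_iff]
      rw [key]
      refine Submodule.sub_mem _ (Submodule.smul_mem _ _ ?_)
        (Submodule.sum_mem _ fun j hj => ?_)
      · exact Submodule.subset_span ⟨T, ⟨hTE, hTc.trans (Nat.le_succ m)⟩, rfl⟩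
      · exact Submodule.subset_span ⟨insert j T,
          ⟨Finset.insert_subset (hA hj) hTE,
            (Finset.card_insert_le _ _).trans (Nat.succ_le_succ hTc)⟩, rfl⟩
  | zero =>
      have : (fun B => (c - ∑ j ∈ A', (if j ∈ B then (1 : ZMod p) else 0)) *
          (0 : Finset (Fin n) → ZMod p) B) = 0 := by funext B; simp
      rw [this]; exact Submodule.zero_mem _
  | add x y hx hy ihx ihy =>
      have : (fun B => (c - ∑ j ∈ A', (if j ∈ B then (1 : ZMod p) else 0)) * (x + y) B)
          = (fun B => (c - ∑ j ∈ A', (if j ∈ B then (1 : ZMod p) else 0)) * x B)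
            + fun B => (c - ∑ j ∈ A', (if j ∈ B then (1 : ZMod p) else 0)) * y B := by
        funext B; simp [mul_add]
      rw [this]; exact Submodule.add_mem _ ihx ihy
  | smul a x hx ih =>
      have : (fun B => (c - ∑ j ∈ A', (if j ∈ B then (1 : ZMod p) else 0)) * (a • x) B)
          = a • fun B => (c - ∑ j ∈ A', (if j ∈ B then (1 : ZMod p) else 0)) * x B := by
        funext B; simp [Pi.smul_apply, smul_eq_mul]; ring
      rw [this]; exact Submodule.smul_mem _ _ ih

lemma prod_mem_Sp {p : ℕ} {E A' : Finset (Fin n)} (hA : A' ⊆ E) (K : Finset ℕ)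
    (c : ℕ → ZMod p) :
    (fun B => ∏ ℓ ∈ K, (c ℓ - ∑ j ∈ A', (if j ∈ B then (1 : ZMod p) else 0)))
      ∈ Sp p E K.card := by
  classical
  induction K using Finset.induction_on with
  | empty =>
      have h : (fun B : Finset (Fin n) => ∏ ℓ ∈ (∅ : Finset ℕ),
          (c ℓ - ∑ j ∈ A', (if j ∈ B then (1 : ZMod p) else 0))) = chi p ∅ := by
        funext B; simp [chi]
      rw [h]
      exact Submodule.subset_span ⟨∅, ⟨Finset.empty_subset E, by simp⟩, rfl⟩
  | insert a K ha ih =>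
      rw [Finset.card_insert_of_notMem ha]
      have h : (fun B : Finset (Fin n) => ∏ ℓ ∈ insert a K,
            (c ℓ - ∑ j ∈ A', (if j ∈ B then (1 : ZMod p) else 0)))
          = fun B : Finset (Fin n) => (c a - ∑ j ∈ A', (if j ∈ B then (1 : ZMod p) else 0)) *
              ∏ ℓ ∈ K, (c ℓ - ∑ j ∈ A', (if j ∈ B then (1 : ZMod p) else 0)) := by
        funext B; exact Finset.prod_insert ha
      rw [h]
      exact mul_mem_Sp hA _ ih

/-- The polynomial-method vectors. -/
def vfun (p : ℕ) (L : Finset ℕ) (i : Fin n) (A : Finset (Fin n)) :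
    Finset (Fin n) → ZMod p :=
  fun B => ∏ ℓ ∈ L, (((A.erase i \ B).card : ZMod p) - (ℓ : ZMod p))

lemma vfun_mem_Sp (p : ℕ) (L : Finset ℕ) (i : Fin n) (A : Finset (Fin n)) :
    vfun p L i A ∈ Sp p ((univ : Finset (Fin n)).erase i) L.card := by
  classical
  have key : vfun p L i A = fun B => ∏ ℓ ∈ L,
      ((((A.erase i).card : ZMod p) - (ℓ : ZMod p))
        - ∑ j ∈ A.erase i, (if j ∈ B then (1 : ZMod p) else 0)) := by
    funext B
    refine Finset.prod_congr rfl fun ℓ _ => ?_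
    have h1 : ((A.erase i ∩ B).card) + ((A.erase i \ B).card) = (A.erase i).card :=
      Finset.card_inter_add_card_sdiff _ _
    have h2 : ∑ j ∈ A.erase i, (if j ∈ B then (1 : ZMod p) else 0)
        = ((A.erase i ∩ B).card : ZMod p) := by
      rw [Finset.sum_boole, Finset.filter_mem_eq_inter]
    have h3 : ((A.erase i \ B).card : ZMod p)
        = ((A.erase i).card : ZMod p) - ((A.erase i ∩ B).card : ZMod p) := by
      have h4 : (((A.erase i ∩ B).card : ZMod p)) + ((A.erase i \ B).card : ZMod p)
          = ((A.erase i).card : ZMod p) := by exact_mod_cast congrArg (Nat.cast : ℕ → ZMod p) h1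
      exact eq_sub_of_add_eq' h4
    rw [h2, h3]; ring
  rw [key]
  exact prod_mem_Sp (Finset.erase_subset_erase i (Finset.subset_univ A)) L
    (fun ℓ => ((A.erase i).card : ZMod p) - (ℓ : ZMod p))

end Stmt8Aux

open Stmt8Aux

theorem stmt_8 (n p s : ℕ) (hp : p.Prime) (L : Finset ℕ)
    (hL : L ⊆ Finset.Icc 1 (p - 1)) (hLs : L.card = s)
    (F : Finset (Finset (Fin n)))
    (hF : ∀ A ∈ F, ∀ B ∈ F, A ≠ B → ∃ ℓ ∈ L, (A \ B).card ≡ ℓ [MOD p]) :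
    F.card ≤ ∑ i ∈ Finset.range (s + 1), (n - 1).choose i := by
  classical
  haveI : Fact p.Prime := ⟨hp⟩
  rcases Nat.eq_zero_or_pos n with hn | hn
  · subst hn
    have h1 : F.card ≤ 1 := by
      calc F.card ≤ (univ : Finset (Finset (Fin 0))).card := card_le_card (subset_univ F)
        _ = 1 := by simp
    refine h1.trans ?_
    have h2 : (0 - 1).choose 0 ≤ ∑ i ∈ Finset.range (s + 1), (0 - 1).choose i :=
      Finset.single_le_sum (fun i _ => Nat.zero_le _) (mem_range.mpr (Nat.succ_pos s))
    simpa using h2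
  · set i : Fin n := ⟨0, hn⟩ with hidef
    -- off-diagonal vanishing
    have hoff : ∀ A ∈ F, ∀ B ∈ F, A ≠ B → (i ∈ B ∨ i ∉ A) → vfun p L i A B = 0 := by
      intro A hA B hB hAB hcase
      obtain ⟨ℓ₀, hℓ₀, hmod⟩ := hF A hA B hB hAB
      have hset : A.erase i \ B = A \ B := by
        ext j
        simp only [mem_sdiff, mem_erase]
        constructor
        · rintro ⟨⟨_, h1⟩, h2⟩; exact ⟨h1, h2⟩
        · rintro ⟨h1, h2⟩
          refine ⟨⟨?_, h1⟩, h2⟩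
          rintro rfl
          rcases hcase with h | h
          · exact h2 h
          · exact h h1
      have hcast : (((A \ B).card : ℕ) : ZMod p) = (ℓ₀ : ZMod p) :=
        (ZMod.natCast_eq_natCast_iff _ _ _).mpr hmod
      refine Finset.prod_eq_zero hℓ₀ ?_
      rw [hset, hcast, sub_self]
    -- diagonal nonvanishing
    have hdiag : ∀ A : Finset (Fin n), vfun p L i A A ≠ 0 := by
      intro A
      have h0 : A.erase i \ A = ∅ :=
        Finset.sdiff_eq_empty_iff_subset.mpr (Finset.erase_subset _ _)
      have : vfun p L i A A = ∏ ℓ ∈ L, (0 - (ℓ : ZMod p)) := by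
        simp [vfun, h0]
      rw [this]
      refine Finset.prod_ne_zero_iff.mpr fun ℓ hℓ => ?_
      have h1 := hL hℓ
      rw [Finset.mem_Icc] at h1
      have hp2 := hp.two_le
      intro h0'
      have hz : ((ℓ : ℕ) : ZMod p) = 0 := by
        have : (0 : ZMod p) - (ℓ : ZMod p) = -(ℓ : ZMod p) := by ring
        rw [this, neg_eq_zero] at h0'
        exact h0'
      have hdvd := (ZMod.natCast_eq_zero_iff _ _).mp hz
      have := Nat.le_of_dvd (by omega) hdvd
      omega
    -- linear independence
    have hind : LinearIndependent (ZMod p) (fun A : ↥F => vfun p L i (A : Finset (Fin n))) := by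
      rw [Fintype.linearIndependent_iff]
      intro g hg
      have heval : ∀ B : ↥F,
          ∑ A : ↥F, g A * vfun p L i (A : Finset (Fin n)) (B : Finset (Fin n)) = 0 := by
        intro B
        have := congrFun hg (B : Finset (Fin n))
        simpa [Finset.sum_apply] using this
      have h1 : ∀ B : ↥F, i ∈ (B : Finset (Fin n)) → g B = 0 := by
        intro B hiB
        have h := heval B
        rw [Finset.sum_eq_single B] at h
        · rcases mul_eq_zero.mp h with h' | h'
          · exact h'
          · exact absurd h' (hdiag _)
        · intro A _ hAB
          rw [hoff _ A.2 _ B.2 (fun hc => hAB (Subtype.ext hc)) (Or.inl hiB), mul_zero]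
        · intro hB; exact absurd (Finset.mem_univ B) hB
      intro B
      by_cases hiB : i ∈ (B : Finset (Fin n))
      · exact h1 B hiB
      · have h := heval B
        rw [Finset.sum_eq_single B] at h
        · rcases mul_eq_zero.mp h with h' | h'
          · exact h'
          · exact absurd h' (hdiag _)
        · intro A _ hAB
          by_cases hiA : i ∈ (A : Finset (Fin n))
          · rw [h1 A hiA, zero_mul]
          · rw [hoff _ A.2 _ B.2 (fun hc => hAB (Subtype.ext hc)) (Or.inr hiA), mul_zero]
        · intro hB; exact absurd (Finset.mem_univ B) hB
    -- everything lies in the span of low-degree monomials avoiding i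
    set W : Submodule (ZMod p) (Finset (Fin n) → ZMod p) :=
      Sp p ((univ : Finset (Fin n)).erase i) s with hW
    have hsub : ∀ A : Finset (Fin n), vfun p L i A ∈ W := by
      intro A
      have := vfun_mem_Sp p L i A
      rwa [hLs] at this
    have hw : LinearIndependent (ZMod p)
        (fun A : ↥F => (⟨vfun p L i (A : Finset (Fin n)), hsub _⟩ : ↥W)) :=
      LinearIndependent.of_comp W.subtype hind
    haveI : FiniteDimensional (ZMod p) ↥W := by
      rw [hW]
      exact FiniteDimensional.span_of_finite _
        ((Set.toFinite {T : Finset (Fin n) | T ⊆ (univ : Finset (Fin n)).erase i ∧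
          T.card ≤ s}).image _)
    have hcard1 : Fintype.card ↥F ≤ Module.finrank (ZMod p) ↥W :=
      hw.fintype_card_le_finrank
    set Ts : Finset (Finset (Fin n)) :=
      ((univ : Finset (Fin n)).erase i).powerset.filter (fun T => T.card ≤ s) with hTsdef
    have hset2 : chi p '' {T : Finset (Fin n) | T ⊆ (univ : Finset (Fin n)).erase i ∧
        T.card ≤ s} = ↑(Ts.image (chi p)) := by
      ext f
      simp [hTsdef, Set.mem_image, Finset.mem_coe, Finset.mem_image, Finset.mem_filter,
        Finset.mem_powerset, and_assoc]
    have hcard2 : Module.finrank (ZMod p) ↥W ≤ Ts.card := by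
      rw [hW]
      unfold Sp
      rw [hset2]
      exact le_trans (by simpa [Set.finrank] using
        finrank_span_finset_le_card (R := ZMod p) (Ts.image (chi p)))
        (Finset.card_image_le)
    have hEcard : ((univ : Finset (Fin n)).erase i).card = n - 1 := by
      rw [Finset.card_erase_of_mem (Finset.mem_univ i), Finset.card_univ, Fintype.card_fin]
    have hTs : Ts.card = ∑ j ∈ Finset.range (s + 1), (n - 1).choose j := by
      rw [Finset.card_eq_sum_card_fiberwise
        (f := fun T => T.card) (t := Finset.range (s + 1)) ?_]
      · refine Finset.sum_congr rfl fun j hj => ?_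
        have hjs : j ≤ s := Nat.lt_succ_iff.mp (mem_range.mp hj)
        have hfib : Ts.filter (fun T => T.card = j)
            = Finset.powersetCard j ((univ : Finset (Fin n)).erase i) := by
          ext T
          simp only [hTsdef, Finset.mem_filter, Finset.mem_powerset,
            Finset.mem_powersetCard]
          constructor
          · rintro ⟨⟨hsub', _⟩, hcard⟩; exact ⟨hsub', hcard⟩
          · rintro ⟨hsub', hcard⟩; exact ⟨⟨hsub', hcard ▸ hjs⟩, hcard⟩
        rw [hfib, Finset.card_powersetCard, hEcard]
      · intro T hT
        simp only [hTsdef, Finset.mem_coe, Finset.mem_filter] at hT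
        exact mem_range.mpr (Nat.lt_succ_of_le hT.2)
    calc F.card = Fintype.card ↥F := (Fintype.card_coe F).symm
      _ ≤ Module.finrank (ZMod p) ↥W := hcard1
      _ ≤ Ts.card := hcard2
      _ = ∑ j ∈ Finset.range (s + 1), (n - 1).choose j := hTs
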